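/- arXiv:2509.20880 — 2 statements merged into one kernel-verified Lean document; each statement's English description precedes it below -/
import Mathlib

section
/- The set G_{n,m} is an abelian group under composition of maps: it is closed under composition, composition restricted to G_{n,m} is commutative, the identity map θ_{m,0} lies in G_{n,m}, and every f ∈ G_{n,m} has a two-sided compositional inverse belonging to G_{n,m}. In particular, every f ∈ G_{n,m} is a bijection of F_2^n. -/
/-- Index `i + j` computed modulo `n`, for `i : Fin n` and `j : ℕ`. -/
def idx {n : ℕ} (i : Fin n) (j : ℕ) : Fin n :=
  ⟨(i.val + j) % n, Nat.mod_lt _ i.pos⟩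

/-- The map `θ_{m,k} : F_2^n → F_2^n`; `θ_{m,0}` is the identity map, and for `k ≥ 1`,
`(θ_{m,k}(x))_i = x_{i+mk} · ∏_{1 ≤ j ≤ mk−1, m ∤ j} (x_{i+j} + 1)` (indices mod `n`). -/
def theta (n m k : ℕ) : (Fin n → ZMod 2) → Fin n → ZMod 2 :=
  if k = 0 then id
  else fun x i =>
    x (idx i (m * k)) *
      ∏ j ∈ (Finset.Ico 1 (m * k)).filter (fun j => ¬ m ∣ j), (x (idx i j) + 1)

/-- The set `G_{n,m}` of maps `θ_{m,0} + Σ_{k=1}^{⌊n/m⌋} a_k • θ_{m,k}` with `a_k ∈ F_2`. -/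
def Gset (n m : ℕ) : Set ((Fin n → ZMod 2) → Fin n → ZMod 2) :=
  { F | ∃ a : ℕ → ZMod 2,
      F = theta n m 0 + ∑ k ∈ Finset.Icc 1 (n / m), a k • theta n m k }

open scoped Classical


lemma z01 : ∀ a : ZMod 2, a = 0 ∨ a = 1 := by decide
lemma zne0 : ∀ a : ZMod 2, a ≠ 0 → a = 1 := by decide
lemma zne1 : ∀ a : ZMod 2, a ≠ 1 → a = 0 := by decide
lemma zadd : ∀ a : ZMod 2, a + a = 0 := by decide

lemma idx_add {n : ℕ} (i : Fin n) (j t : ℕ) : idx (idx i j) t = idx i (j + t) := by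
  unfold idx
  apply Fin.ext
  simp [Nat.mod_add_mod, Nat.add_assoc]

lemma theta_zero (n m : ℕ) : theta n m 0 = id := rfl

lemma theta_eq_ite (n m k : ℕ) (hk : k ≠ 0) (x : Fin n → ZMod 2) (i : Fin n) :
    theta n m k x i =
      if (x (idx i (m * k)) = 1 ∧ ∀ j, 1 ≤ j → j < m * k → ¬ m ∣ j → x (idx i j) = 0)
      then 1 else 0 := by
  unfold theta
  rw [if_neg hk]
  have hp : (∏ j ∈ (Finset.Ico 1 (m * k)).filter (fun j => ¬ m ∣ j), (x (idx i j) + 1)) =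
      if (∀ j, 1 ≤ j → j < m * k → ¬ m ∣ j → x (idx i j) = 0) then 1 else 0 := by
    by_cases h : ∀ j, 1 ≤ j → j < m * k → ¬ m ∣ j → x (idx i j) = 0
    · rw [if_pos h]
      apply Finset.prod_eq_one
      intro j hj
      simp only [Finset.mem_filter, Finset.mem_Ico] at hj
      rw [h j hj.1.1 hj.1.2 hj.2, zero_add]
    · rw [if_neg h]
      push_neg at h
      obtain ⟨j, h1, h2, h3, h4⟩ := h
      apply Finset.prod_eq_zero (i := j)
      · simp only [Finset.mem_filter, Finset.mem_Ico]
        exact ⟨⟨h1, h2⟩, h3⟩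
      · rw [zne0 _ h4]; decide
  rw [hp]
  rcases z01 (x (idx i (m * k))) with h | h
  · rw [h, zero_mul, if_neg]
    rintro ⟨hc, -⟩
    exact absurd hc (by decide)
  · rw [h, one_mul]
    by_cases hall : ∀ j, 1 ≤ j → j < m * k → ¬ m ∣ j → x (idx i j) = 0
    · rw [if_pos hall, if_pos ⟨rfl, hall⟩]
    · rw [if_neg hall, if_neg (fun hc => hall hc.2)]

lemma key_point (m k l : ℕ) (hm : m ≠ 0) (hk : k ≠ 0) (hl : l ≠ 0)
    (u w : ℕ → ZMod 2)
    (hw' : ∀ j, w j = if (u (j + m * l) = 1 ∧ ∀ t, 1 ≤ t → t < m * l → ¬ m ∣ t → u (j + t) = 0)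
      then 1 else 0) :
    (if (u (m * k) + w (m * k) = 1 ∧
        ∀ j, 1 ≤ j → j < m * k → ¬ m ∣ j → u j + w j = 0) then (1 : ZMod 2) else 0) =
    (if (u (m * k) = 1 ∧ ∀ j, 1 ≤ j → j < m * k → ¬ m ∣ j → u j = 0) then 1 else 0) +
    (if (u (m * (k + l)) = 1 ∧ ∀ j, 1 ≤ j → j < m * (k + l) → ¬ m ∣ j → u j = 0)
      then 1 else 0) := by
  set W : ℕ → Prop :=
    fun j => (u (j + m * l) = 1 ∧ ∀ t, 1 ≤ t → t < m * l → ¬ m ∣ t → u (j + t) = 0) with hWdef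
  have hw : ∀ j, w j = if W j then 1 else 0 := fun j => by
    by_cases h : W j
    · rw [hw' j, if_pos h, if_pos h]
    · rw [hw' j, if_neg h, if_neg h]
  have hml1 : 1 ≤ m * l := Nat.one_le_iff_ne_zero.mpr (Nat.mul_ne_zero hm hl)
  have hmk1 : 1 ≤ m * k := Nat.one_le_iff_ne_zero.mpr (Nat.mul_ne_zero hm hk)
  have hdvd_ml : m ∣ m * l := dvd_mul_right m l
  have hdvd_mk : m ∣ m * k := dvd_mul_right m k
  have dvdml : ∀ a : ℕ, m ∣ a + m * l → m ∣ a := by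
    intro a h
    have := Nat.dvd_sub h hdvd_ml
    simpa using this
  have sub2 : ∀ j, 1 ≤ j → j < m * k → ¬ m ∣ j → W j → m * k < j + m * l →
      u (m * k) = 0 ∧ ¬ W (m * k) := by
    intro j h1 h2 h3 hWj hlt
    constructor
    · have ht3 : ¬ m ∣ (m * k - j) := by
        intro hd
        apply h3
        have h5 := Nat.dvd_sub hdvd_mk hd
        rwa [Nat.sub_sub_self (le_of_lt h2)] at h5
      have h6 := hWj.2 _ (by omega) (by omega : m * k - j < m * l) ht3
      rwa [Nat.add_sub_cancel' (le_of_lt h2)] at h6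
    · intro hWmk
      have hs3 : ¬ m ∣ (j + m * l - m * k) := by
        intro hd
        apply h3
        apply dvdml
        have h4 := dvd_add hd hdvd_mk
        rwa [Nat.sub_add_cancel (le_of_lt hlt)] at h4
      have h6 := hWmk.2 _ (by omega) (by omega : j + m * l - m * k < m * l) hs3
      rw [Nat.add_sub_cancel' (le_of_lt hlt)] at h6
      rw [hWj.1] at h6
      exact absurd h6 (by decide)
  by_cases hN : ∀ j, 1 ≤ j → j < m * k → ¬ m ∣ j → u j = 0
  · -- Case 2 : no ones at non-multiple offsets below m*k
    have hgt : ∀ j, 1 ≤ j → j < m * k → ¬ m ∣ j → W j → m * k < j + m * l := by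
      intro j h1 h2 h3 hWj
      rcases Nat.lt_trichotomy (j + m * l) (m * k) with h | h | h
      · exfalso
        have h5 := hN (j + m * l) (by omega) h (fun hd => h3 (dvdml _ hd))
        rw [hWj.1] at h5
        exact absurd h5 (by decide)
      · exact absurd (dvdml _ (by rw [h]; exact hdvd_mk)) h3
      · exact h
    have hEquiv : W (m * k) ↔ (u (m * (k + l)) = 1 ∧
        ∀ j, 1 ≤ j → j < m * (k + l) → ¬ m ∣ j → u j = 0) := by
      have hmkl : m * k + m * l = m * (k + l) := by ring
      constructor
      · rintro ⟨h1, h2⟩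
        refine ⟨by rwa [hmkl] at h1, ?_⟩
        intro j hj1 hj2 hj3
        rcases Nat.lt_trichotomy j (m * k) with h | h | h
        · exact hN j hj1 h hj3
        · exact absurd (by rw [h]; exact hdvd_mk) hj3
        · have h6 := h2 (j - m * k) (by omega) (by omega) (fun hd => hj3 (by
            have h5 := dvd_add hd hdvd_mk
            rwa [Nat.sub_add_cancel (le_of_lt h)] at h5))
          rwa [Nat.add_sub_cancel' (le_of_lt h)] at h6
      · rintro ⟨h1, h2⟩
        refine ⟨by rwa [hmkl], ?_⟩
        intro t ht1 ht2 ht3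
        exact h2 (m * k + t) (by omega) (by omega) (fun hd => ht3 (by
          have h5 := Nat.dvd_sub hd hdvd_mk
          simpa using h5))
    have hnoW : (W (m * k) ∨ u (m * k) = 1) → ∀ j, 1 ≤ j → j < m * k → ¬ m ∣ j → ¬ W j := by
      intro hcase j h1 h2 h3 hWj
      obtain ⟨hu0, hnW⟩ := sub2 j h1 h2 h3 hWj (hgt j h1 h2 h3 hWj)
      rcases hcase with hc | hc
      · exact hnW hc
      · rw [hu0] at hc; exact absurd hc (by decide)
    by_cases hu : u (m * k) = 1
    · by_cases hWk : W (m * k)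
      · rw [if_neg, if_pos ⟨hu, hN⟩, if_pos (hEquiv.mp hWk)]
        · decide
        · rintro ⟨hc, -⟩
          rw [hw, if_pos hWk, hu] at hc
          exact absurd hc (by decide)
      · rw [if_pos, if_pos ⟨hu, hN⟩, if_neg (fun hc => hWk (hEquiv.mpr hc))]
        · decide
        · constructor
          · rw [hw, if_neg hWk, hu, add_zero]
          · intro j h1 h2 h3
            rw [hw, if_neg (hnoW (Or.inr hu) j h1 h2 h3), hN j h1 h2 h3, add_zero]
    · have hu0 : u (m * k) = 0 := zne1 _ hu
      by_cases hWk : W (m * k)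
      · rw [if_pos, if_neg (fun hc => hu hc.1), if_pos (hEquiv.mp hWk)]
        · decide
        · constructor
          · rw [hw, if_pos hWk, hu0, zero_add]
          · intro j h1 h2 h3
            rw [hw, if_neg (hnoW (Or.inl hWk) j h1 h2 h3), hN j h1 h2 h3, add_zero]
      · rw [if_neg, if_neg (fun hc => hu hc.1), if_neg (fun hc => hWk (hEquiv.mpr hc))]
        · decide
        · rintro ⟨hc, -⟩
          rw [hw, if_neg hWk, hu0, add_zero] at hc
          exact absurd hc (by decide)
  · -- Case 1 : there is a one at a non-multiple offset below m*k
    push_neg at hN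
    obtain ⟨j1, hj11, hj12, hj13, hj14⟩ := hN
    have hTne : ((Finset.Ico 1 (m * k)).filter (fun j => ¬ m ∣ j ∧ u j ≠ 0)).Nonempty := by
      refine ⟨j1, ?_⟩
      simp only [Finset.mem_filter, Finset.mem_Ico]
      exact ⟨⟨hj11, hj12⟩, hj13, hj14⟩
    obtain ⟨j0, hj0mem, hmax0⟩ :
        ∃ j0 ∈ (Finset.Ico 1 (m * k)).filter (fun j => ¬ m ∣ j ∧ u j ≠ 0),
          ∀ j ∈ (Finset.Ico 1 (m * k)).filter (fun j => ¬ m ∣ j ∧ u j ≠ 0), j ≤ j0 :=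
      ⟨_, Finset.max'_mem _ hTne, fun j hj => Finset.le_max' _ j hj⟩
    simp only [Finset.mem_filter, Finset.mem_Ico] at hj0mem
    obtain ⟨⟨h01, h02⟩, h03, h04⟩ := hj0mem
    have hmax : ∀ j, 1 ≤ j → j < m * k → ¬ m ∣ j → u j ≠ 0 → j ≤ j0 := by
      intro j a b c d
      apply hmax0
      simp only [Finset.mem_filter, Finset.mem_Ico]
      exact ⟨⟨a, b⟩, c, d⟩
    have hC1 : ¬ (u (m * k) + w (m * k) = 1 ∧
        ∀ j, 1 ≤ j → j < m * k → ¬ m ∣ j → u j + w j = 0) := by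
      by_cases hW0 : W j0
      · have hlt : m * k < j0 + m * l := by
          rcases Nat.lt_trichotomy (j0 + m * l) (m * k) with h | h | h
          · exfalso
            have h5 := hmax (j0 + m * l) (by omega) h (fun hd => h03 (dvdml _ hd))
              (by rw [hW0.1]; decide)
            omega
          · exact absurd (dvdml _ (by rw [h]; exact hdvd_mk)) h03
          · exact h
        obtain ⟨hu0, hnWmk⟩ := sub2 j0 h01 h02 h03 hW0 hlt
        rintro ⟨hc, -⟩
        rw [hw, if_neg hnWmk, hu0, zero_add] at hc
        exact absurd hc (by decide)
      · rintro ⟨-, hall⟩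
        have h5 := hall j0 h01 h02 h03
        rw [hw, if_neg hW0, add_zero] at h5
        exact h04 h5
    rw [if_neg hC1, if_neg (fun hc => h04 (hc.2 j0 h01 h02 h03)),
      if_neg (fun hc => h04 (hc.2 j0 h01
        (lt_of_lt_of_le h02 (Nat.mul_le_mul_left m (Nat.le_add_right k l))) h03))]
    decide

lemma key (n m k l : ℕ) (hm : m ≠ 0) (hl : l ≠ 0) :
    theta n m k ∘ (theta n m 0 + theta n m l) = theta n m k + theta n m (k + l) := by
  by_cases hk : k = 0
  · subst hk
    rw [Nat.zero_add, theta_zero, Function.id_comp]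
  · funext x i
    have hkl : k + l ≠ 0 := by omega
    have hw : ∀ j : ℕ, theta n m l x (idx i j) =
        if (x (idx i (j + m * l)) = 1 ∧
            ∀ t, 1 ≤ t → t < m * l → ¬ m ∣ t → x (idx i (j + t)) = 0)
        then 1 else 0 := by
      intro j
      rw [theta_eq_ite n m l hl x (idx i j)]
      simp only [idx_add]
      by_cases hC : x (idx i (j + m * l)) = 1 ∧
          ∀ t, 1 ≤ t → t < m * l → ¬ m ∣ t → x (idx i (j + t)) = 0
      · rw [if_pos hC, if_pos hC]
      · rw [if_neg hC, if_neg hC]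
    have h := key_point m k l hm hk hl (fun t => x (idx i t))
      (fun j => theta n m l x (idx i j)) hw
    simp only [Function.comp_apply, Pi.add_apply, theta_zero, id_eq]
    rw [theta_eq_ite n m k hk, theta_eq_ite n m k hk, theta_eq_ite n m (k + l) hkl]
    simp only [Pi.add_apply]
    exact h

lemma theta_eq_zero_of (n m k : ℕ) (hmn : ¬ m ∣ n) (hnk : n < m * k) :
    theta n m k = 0 := by
  funext x i
  have hn : 1 ≤ n := i.pos
  have hk : k ≠ 0 := by rintro rfl; omega
  rw [theta_eq_ite n m k hk, Pi.zero_apply, Pi.zero_apply, if_neg]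
  rintro ⟨h1, h2⟩
  have hj : ¬ m ∣ (m * k - n) := by
    intro hd
    apply hmn
    have h5 := Nat.dvd_sub (dvd_mul_right m k) hd
    rwa [Nat.sub_sub_self (le_of_lt hnk)] at h5
  have h6 := h2 (m * k - n) (by omega) (by omega) hj
  have hidx : idx i (m * k - n) = idx i (m * k) := by
    apply Fin.ext
    show (i.val + (m * k - n)) % n = (i.val + m * k) % n
    have h7 : i.val + m * k = (i.val + (m * k - n)) + n := by omega
    rw [h7, Nat.add_mod_right]
  rw [hidx, h1] at h6
  exact absurd h6 (by decide)

def mul1 (l : ℕ) (c : ℕ → ZMod 2) : ℕ → ZMod 2 :=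
  fun d => c d + if l ≤ d then c (d - l) else 0

def coeL : List ℕ → ℕ → ZMod 2
  | [] => fun d => if d = 0 then 1 else 0
  | l :: L => mul1 l (coeL L)

def conv (a b : ℕ → ZMod 2) : ℕ → ZMod 2 :=
  fun d => ∑ e ∈ Finset.range (d + 1), a e * b (d - e)

def compL (n m : ℕ) : List ℕ → ((Fin n → ZMod 2) → Fin n → ZMod 2)
  | [] => theta n m 0
  | l :: L => (theta n m 0 + theta n m l) ∘ compL n m L

lemma coeL_zero (L : List ℕ) (h : ∀ l ∈ L, l ≠ 0) : coeL L 0 = 1 := by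
  induction L with
  | nil => rfl
  | cons l L ih =>
    have hl : l ≠ 0 := h l (List.mem_cons_self)
    show mul1 l (coeL L) 0 = 1
    unfold mul1
    rw [if_neg (by omega), add_zero, ih (fun x hx => h x (List.mem_cons_of_mem l hx))]

lemma coeL_bound (L : List ℕ) : ∀ d, L.sum < d → coeL L d = 0 := by
  induction L with
  | nil =>
    intro d hd
    show (if d = 0 then (1 : ZMod 2) else 0) = 0
    rw [if_neg (by simp at hd; omega)]
  | cons l L ih =>
    intro d hd
    rw [List.sum_cons] at hd
    show mul1 l (coeL L) d = 0
    unfold mul1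
    rw [ih d (by omega), zero_add]
    by_cases h : l ≤ d
    · rw [if_pos h]; exact ih (d - l) (by omega)
    · rw [if_neg h]

lemma theta_comp_compL (n m : ℕ) (hm : m ≠ 0) (L : List ℕ) (h : ∀ l ∈ L, l ≠ 0) : ∀ k,
    theta n m k ∘ compL n m L =
      ∑ d ∈ Finset.range (L.sum + 1), coeL L d • theta n m (k + d) := by
  induction L with
  | nil =>
    intro k
    show theta n m k ∘ theta n m 0 = _
    rw [theta_zero]
    simp [coeL]
  | cons l L ih =>
    intro k
    have hl : l ≠ 0 := h l (List.mem_cons_self)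
    have hL : ∀ x ∈ L, x ≠ 0 := fun x hx => h x (List.mem_cons_of_mem l hx)
    show theta n m k ∘ ((theta n m 0 + theta n m l) ∘ compL n m L) = _
    rw [← Function.comp_assoc, key n m k l hm hl]
    have hsplit : (theta n m k + theta n m (k + l)) ∘ compL n m L =
        theta n m k ∘ compL n m L + theta n m (k + l) ∘ compL n m L := rfl
    rw [hsplit, ih hL k, ih hL (k + l), List.sum_cons]
    have e1 : ∑ d ∈ Finset.range (l + L.sum + 1), coeL (l :: L) d • theta n m (k + d)
        = (∑ d ∈ Finset.range (l + L.sum + 1), coeL L d • theta n m (k + d))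
          + ∑ d ∈ Finset.range (l + L.sum + 1),
              (if l ≤ d then coeL L (d - l) else 0) • theta n m (k + d) := by
      rw [← Finset.sum_add_distrib]
      refine Finset.sum_congr rfl (fun d _ => ?_)
      show mul1 l (coeL L) d • _ = _
      unfold mul1
      rw [add_smul]
    have e2 : ∑ d ∈ Finset.range (l + L.sum + 1), coeL L d • theta n m (k + d)
        = ∑ d ∈ Finset.range (L.sum + 1), coeL L d • theta n m (k + d) :=
      (Finset.sum_subset (Finset.range_subset_range.mpr (by omega))
        (fun x _ hx => by
          rw [coeL_bound L x (by simp only [Finset.mem_range] at hx; omega), zero_smul])).symm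
    have e3 : ∑ d ∈ Finset.range (l + L.sum + 1),
          (if l ≤ d then coeL L (d - l) else 0) • theta n m (k + d)
        = ∑ d ∈ Finset.range (L.sum + 1), coeL L d • theta n m (k + l + d) := by
      have s1 : ∑ d ∈ Finset.range (l + L.sum + 1),
            (if l ≤ d then coeL L (d - l) else 0) • theta n m (k + d)
          = ∑ d ∈ Finset.Ico l (l + L.sum + 1),
            (if l ≤ d then coeL L (d - l) else 0) • theta n m (k + d) :=
        (Finset.sum_subset
          (by intro x hx; simp only [Finset.mem_Ico] at hx; simp only [Finset.mem_range]; omega)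
          (fun x hx hnx => by
            simp only [Finset.mem_range] at hx
            simp only [Finset.mem_Ico] at hnx
            rw [if_neg (by omega), zero_smul])).symm
      rw [s1, Finset.sum_congr rfl (fun d hd => by
        rw [if_pos (Finset.mem_Ico.mp hd).1]), Finset.sum_Ico_eq_sum_range]
      have h5 : l + L.sum + 1 - l = L.sum + 1 := by omega
      rw [h5]
      refine Finset.sum_congr rfl (fun e he => ?_)
      rw [Nat.add_sub_cancel_left, ← Nat.add_assoc]
    rw [e1, e2, e3]

lemma compL_eq (n m : ℕ) (hm : m ≠ 0) (L : List ℕ) (h : ∀ l ∈ L, l ≠ 0) :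
    compL n m L = ∑ d ∈ Finset.range (L.sum + 1), coeL L d • theta n m d := by
  have h1 := theta_comp_compL n m hm L h 0
  rw [theta_zero, Function.id_comp] at h1
  rw [h1]
  exact Finset.sum_congr rfl (fun d _ => by rw [Nat.zero_add])

lemma sum_to_Icc (n m : ℕ) (hn : 1 ≤ n) (hm : m ≠ 0) (hmn : ¬ m ∣ n) (c : ℕ → ZMod 2)
    (hc0 : c 0 = 1) (B : ℕ) (hB : ∀ d, B < d → c d = 0) :
    ∑ d ∈ Finset.range (B + 1), c d • theta n m d =
      theta n m 0 + ∑ d ∈ Finset.Icc 1 (n / m), c d • theta n m d := by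
  have hzero : ∀ d, n / m < d → theta n m d = 0 := by
    intro d hd
    apply theta_eq_zero_of n m d hmn
    have hm' : 0 < m := Nat.pos_of_ne_zero hm
    rw [Nat.mul_comm]
    exact (Nat.div_lt_iff_lt_mul hm').mp hd
  rw [Finset.sum_range_succ', hc0, one_smul, add_comm]
  congr 1
  rw [← Finset.Ico_add_one_right_eq_Icc, Finset.sum_Ico_eq_sum_range]
  have h5 : n / m + 1 - 1 = n / m := by simp
  rw [h5]
  have hterm : ∀ i : ℕ, (B ≤ i ∨ n / m ≤ i) → c (i + 1) • theta n m (i + 1) = 0 := by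
    intro i hi
    rcases hi with hi | hi
    · rw [hB (i + 1) (by omega), zero_smul]
    · rw [hzero (i + 1) (Nat.lt_succ_of_le hi), smul_zero]
  have e1 : ∑ i ∈ Finset.range B, c (i + 1) • theta n m (i + 1)
      = ∑ i ∈ Finset.range (max B (n / m)), c (i + 1) • theta n m (i + 1) :=
    Finset.sum_subset (Finset.range_subset_range.mpr (le_max_left _ _))
      (fun x _ hx => hterm x (Or.inl (by simp only [Finset.mem_range] at hx; omega)))
  have e2a : ∑ i ∈ Finset.range (n / m), c (1 + i) • theta n m (1 + i)
      = ∑ i ∈ Finset.range (n / m), c (i + 1) • theta n m (i + 1) :=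
    Finset.sum_congr rfl (fun i _ => by rw [Nat.add_comm 1 i])
  have e2 : ∑ i ∈ Finset.range (n / m), c (1 + i) • theta n m (1 + i)
      = ∑ i ∈ Finset.range (max B (n / m)), c (i + 1) • theta n m (i + 1) := by
    rw [e2a]
    exact Finset.sum_subset (Finset.range_subset_range.mpr (le_max_right _ _))
      (fun x _ hx => hterm x (Or.inr (Nat.le_of_not_lt (fun hc => hx (Finset.mem_range.mpr hc)))))
  rw [e1, e2]

lemma compL_mem_can (n m : ℕ) (hn : 1 ≤ n) (hm : m ≠ 0) (hmn : ¬ m ∣ n)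
    (L : List ℕ) (h : ∀ l ∈ L, l ≠ 0) :
    compL n m L = theta n m 0 + ∑ d ∈ Finset.Icc 1 (n / m), coeL L d • theta n m d := by
  rw [compL_eq n m hm L h]
  exact sum_to_Icc n m hn hm hmn (coeL L) (coeL_zero L h) L.sum (coeL_bound L)

lemma conv_comm (a b : ℕ → ZMod 2) : conv a b = conv b a := by
  funext d
  show ∑ e ∈ Finset.range (d + 1), a e * b (d - e)
      = ∑ e ∈ Finset.range (d + 1), b e * a (d - e)
  conv_lhs => rw [← Finset.sum_range_reflect]
  refine Finset.sum_congr rfl (fun e he => ?_)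
  rw [Finset.mem_range] at he
  have h1 : d + 1 - 1 - e = d - e := by omega
  have h2 : d - (d - e) = e := by omega
  rw [h1, h2, mul_comm]

lemma conv_one (b : ℕ → ZMod 2) : conv (fun d => if d = 0 then 1 else 0) b = b := by
  funext d
  show ∑ e ∈ Finset.range (d + 1), (if e = 0 then (1 : ZMod 2) else 0) * b (d - e) = b d
  rw [Finset.sum_eq_single_of_mem 0 (Finset.mem_range.mpr (by omega))
    (fun e _ he => by rw [if_neg he, zero_mul])]
  rw [if_pos rfl, one_mul, Nat.sub_zero]

lemma conv_mul1 (l : ℕ) (a b : ℕ → ZMod 2) : conv (mul1 l a) b = mul1 l (conv a b) := by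
  funext d
  show ∑ e ∈ Finset.range (d + 1), (a e + if l ≤ e then a (e - l) else 0) * b (d - e)
      = conv a b d + if l ≤ d then conv a b (d - l) else 0
  have e0 : ∑ e ∈ Finset.range (d + 1), (a e + if l ≤ e then a (e - l) else 0) * b (d - e)
      = (∑ e ∈ Finset.range (d + 1), a e * b (d - e))
        + ∑ e ∈ Finset.range (d + 1), (if l ≤ e then a (e - l) * b (d - e) else 0) := by
    rw [← Finset.sum_add_distrib]
    exact Finset.sum_congr rfl (fun e _ => by rw [add_mul, ite_mul, zero_mul])
  rw [e0]
  congr 1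
  by_cases h : l ≤ d
  · rw [if_pos h]
    have s1 : ∑ e ∈ Finset.range (d + 1), (if l ≤ e then a (e - l) * b (d - e) else 0)
        = ∑ e ∈ Finset.Ico l (d + 1), (if l ≤ e then a (e - l) * b (d - e) else 0) :=
      (Finset.sum_subset
        (by intro x hx; simp only [Finset.mem_Ico] at hx; simp only [Finset.mem_range]; omega)
        (fun x hx hnx => by
          simp only [Finset.mem_range] at hx
          simp only [Finset.mem_Ico] at hnx
          rw [if_neg (by omega)])).symm
    rw [s1, Finset.sum_congr rfl (fun e he => by rw [if_pos (Finset.mem_Ico.mp he).1]),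
      Finset.sum_Ico_eq_sum_range]
    have h5 : d + 1 - l = d - l + 1 := by omega
    rw [h5]
    refine Finset.sum_congr rfl (fun e he => ?_)
    rw [Nat.add_sub_cancel_left, Nat.sub_add_eq]
  · rw [if_neg h]
    apply Finset.sum_eq_zero
    intro e he
    rw [Finset.mem_range] at he
    rw [if_neg (by omega)]

lemma coeL_append (L1 L2 : List ℕ) : coeL (L1 ++ L2) = conv (coeL L1) (coeL L2) := by
  induction L1 with
  | nil => rw [List.nil_append]; exact (conv_one (coeL L2)).symm
  | cons l L ih =>
    show mul1 l (coeL (L ++ L2)) = conv (mul1 l (coeL L)) (coeL L2)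
    rw [ih, conv_mul1]

lemma compL_append (n m : ℕ) (L1 L2 : List ℕ) :
    compL n m (L1 ++ L2) = compL n m L1 ∘ compL n m L2 := by
  induction L1 with
  | nil =>
    show compL n m L2 = theta n m 0 ∘ compL n m L2
    rw [theta_zero, Function.id_comp]
  | cons l L ih =>
    show (theta n m 0 + theta n m l) ∘ compL n m (L ++ L2)
        = ((theta n m 0 + theta n m l) ∘ compL n m L) ∘ compL n m L2
    rw [ih, Function.comp_assoc]

lemma exists_list (ℓ : ℕ) : ∀ (t j : ℕ), 1 ≤ j → ℓ + 1 ≤ j + t →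
    ∀ a : ℕ → ZMod 2, a 0 = 1 → (∀ d, 1 ≤ d → d < j → a d = 0) →
    ∃ L : List ℕ, (∀ l ∈ L, l ≠ 0) ∧ ∀ d, d ≤ ℓ → coeL L d = a d := by
  intro t
  induction t with
  | zero =>
    intro j hj1 hj2 a ha0 hz
    refine ⟨[], by simp, ?_⟩
    intro d hd
    match d with
    | 0 => exact ha0.symm
    | (d' + 1) =>
      show (if d' + 1 = 0 then (1 : ZMod 2) else 0) = a (d' + 1)
      rw [if_neg (by omega), (hz (d' + 1) (by omega) (by omega)).symm]
  | succ t ih =>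
    intro j hj1 hj2 a ha0 hz
    by_cases haj : a j = 0
    · exact ih (j + 1) (by omega) (by omega) a ha0 (fun d h1 h2 => by
        rcases Nat.lt_or_ge d j with h | h
        · exact hz d h1 h
        · have hdj : d = j := by omega
          rw [hdj]; exact haj)
    · have haj1 : a j = 1 := zne0 _ haj
      set b : ℕ → ZMod 2 := fun d => ∑ s ∈ Finset.range (d / j + 1), a (d - s * j) with hb
      have hb0 : b 0 = 1 := by
        rw [hb]
        show ∑ s ∈ Finset.range (0 / j + 1), a (0 - s * j) = 1
        rw [Nat.zero_div, Finset.sum_range_one, Nat.zero_sub, ha0]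
      have hbz : ∀ d, 1 ≤ d → d < j + 1 → b d = 0 := by
        intro d h1 h2
        rcases Nat.lt_or_ge d j with h | h
        · have hq : d / j = 0 := Nat.div_eq_of_lt h
          rw [hb]
          show ∑ s ∈ Finset.range (d / j + 1), a (d - s * j) = 0
          rw [hq, Finset.sum_range_one, Nat.zero_mul, Nat.sub_zero]
          exact hz d h1 h
        · have hdj : d = j := by omega
          have hq : d / j = 1 := by rw [hdj]; exact Nat.div_self (by omega)
          rw [hb]
          show ∑ s ∈ Finset.range (d / j + 1), a (d - s * j) = 0
          rw [hq, Finset.sum_range_succ, Finset.sum_range_one, Nat.zero_mul, Nat.sub_zero,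
            Nat.one_mul, hdj, Nat.sub_self, ha0, haj1]
          decide
      have hbrec : ∀ d, j ≤ d → b d + b (d - j) = a d := by
        intro d hdj
        have hq : d / j = (d - j) / j + 1 := by
          conv_lhs => rw [← Nat.sub_add_cancel hdj]
          rw [Nat.add_div_right _ (by omega)]
        have h1 : b d = a d + ∑ s ∈ Finset.range (d / j), a (d - (s + 1) * j) := by
          rw [hb]
          show ∑ s ∈ Finset.range (d / j + 1), a (d - s * j) = _
          rw [Finset.sum_range_succ']
          rw [add_comm]
          congr 1
          rw [Nat.zero_mul, Nat.sub_zero]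
        have h2 : b (d - j) = ∑ s ∈ Finset.range (d / j), a (d - (s + 1) * j) := by
          rw [hb]
          show ∑ s ∈ Finset.range ((d - j) / j + 1), a ((d - j) - s * j) = _
          rw [show (d - j) / j + 1 = d / j from hq.symm]
          refine Finset.sum_congr rfl (fun s hs => ?_)
          congr 1
          rw [Nat.succ_mul, Nat.sub_sub, Nat.add_comm j (s * j)]
        rw [h1, h2, add_assoc, zadd, add_zero]
      obtain ⟨L', hL'1, hL'2⟩ := ih (j + 1) (by omega) (by omega) b hb0 hbz
      refine ⟨j :: L', ?_, ?_⟩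
      · intro x hx
        rcases List.mem_cons.mp hx with h | h
        · omega
        · exact hL'1 x h
      · intro d hd
        show mul1 j (coeL L') d = a d
        unfold mul1
        by_cases h : j ≤ d
        · rw [if_pos h, hL'2 d hd, hL'2 (d - j) (by omega), hbrec d h]
        · rw [if_neg h, add_zero, hL'2 d hd]
          rcases Nat.eq_zero_or_pos d with h0 | h0
          · rw [h0, hb0, ha0]
          · rw [hbz d h0 (by omega), hz d h0 (by omega)]

def invSeq (c : ℕ → ZMod 2) : ℕ → ZMod 2
  | 0 => 1
  | (d + 1) => ∑ e ∈ (Finset.range (d + 1)).attach, c (d + 1 - e.1) * invSeq c e.1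
  decreasing_by exact Finset.mem_range.mp e.2

lemma invSeq_zero (c : ℕ → ZMod 2) : invSeq c 0 = 1 := by rw [invSeq]

lemma invSeq_succ (c : ℕ → ZMod 2) (d : ℕ) :
    invSeq c (d + 1) = ∑ e ∈ Finset.range (d + 1), c (d + 1 - e) * invSeq c e := by
  rw [invSeq, ← Finset.sum_attach (Finset.range (d + 1)) (fun e => c (d + 1 - e) * invSeq c e)]

lemma conv_invSeq (c : ℕ → ZMod 2) (hc : c 0 = 1) : ∀ d, 1 ≤ d → conv c (invSeq c) d = 0 := by
  intro d hd
  obtain ⟨d', rfl⟩ : ∃ d', d = d' + 1 := ⟨d - 1, by omega⟩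
  show ∑ e ∈ Finset.range (d' + 1 + 1), c e * invSeq c (d' + 1 - e) = 0
  rw [Finset.sum_range_succ', hc, one_mul, Nat.sub_zero]
  have h1 : ∑ i ∈ Finset.range (d' + 1), c (i + 1) * invSeq c (d' + 1 - (i + 1))
      = invSeq c (d' + 1) := by
    rw [invSeq_succ]
    conv_rhs => rw [← Finset.sum_range_reflect]
    refine Finset.sum_congr rfl (fun i hi => ?_)
    rw [Finset.mem_range] at hi
    have e1 : d' + 1 - 1 - i = d' - i := by omega
    have e2 : d' + 1 - (i + 1) = d' - i := by omega
    have e3 : d' + 1 - (d' - i) = i + 1 := by omega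
    rw [e1, e2, e3]
  rw [h1, zadd]

theorem stmt6 (n m : ℕ) (hn : 1 ≤ n) (hm : 2 ≤ m) (hmn : ¬ m ∣ n) :
    (∀ f ∈ Gset n m, ∀ g ∈ Gset n m, f ∘ g ∈ Gset n m) ∧
    (∀ f ∈ Gset n m, ∀ g ∈ Gset n m, f ∘ g = g ∘ f) ∧
    (id ∈ Gset n m) ∧
    (∀ f ∈ Gset n m, ∃ g ∈ Gset n m, f ∘ g = id ∧ g ∘ f = id) ∧
    (∀ f ∈ Gset n m, Function.Bijective f) := by
  have hm0 : m ≠ 0 := by omega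
  have hmem : ∀ L : List ℕ, (∀ l ∈ L, l ≠ 0) → compL n m L ∈ Gset n m := by
    intro L h
    exact ⟨coeL L, compL_mem_can n m hn hm0 hmn L h⟩
  have hrep : ∀ F ∈ Gset n m, ∃ L : List ℕ, (∀ l ∈ L, l ≠ 0) ∧ F = compL n m L := by
    rintro F ⟨a, rfl⟩
    obtain ⟨L, hL1, hL2⟩ := exists_list (n / m) (n / m) 1 (by omega) (by omega)
      (fun d => if d = 0 then 1 else a d) (by simp) (fun d h1 h2 => by omega)
    refine ⟨L, hL1, ?_⟩
    rw [compL_mem_can n m hn hm0 hmn L hL1]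
    congr 1
    refine Finset.sum_congr rfl (fun d hd => ?_)
    rw [Finset.mem_Icc] at hd
    rw [hL2 d hd.2]
    have hd0 : d ≠ 0 := by omega
    simp [hd0]
  have hcomm : ∀ (L1 L2 : List ℕ), (∀ l ∈ L1, l ≠ 0) → (∀ l ∈ L2, l ≠ 0) →
      compL n m (L1 ++ L2) = compL n m (L2 ++ L1) := by
    intro L1 L2 h1 h2
    have ha : ∀ l ∈ L1 ++ L2, l ≠ 0 := by
      intro l hl; rcases List.mem_append.mp hl with h | h
      exacts [h1 l h, h2 l h]
    have hb : ∀ l ∈ L2 ++ L1, l ≠ 0 := by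
      intro l hl; rcases List.mem_append.mp hl with h | h
      exacts [h2 l h, h1 l h]
    rw [compL_mem_can n m hn hm0 hmn _ ha, compL_mem_can n m hn hm0 hmn _ hb,
      coeL_append, coeL_append, conv_comm]
  have hinv : ∀ f ∈ Gset n m, ∃ g ∈ Gset n m, f ∘ g = id ∧ g ∘ f = id := by
    intro f hf
    obtain ⟨L1, h1, rfl⟩ := hrep f hf
    have hc0 : coeL L1 0 = 1 := coeL_zero L1 h1
    obtain ⟨L2, h2, hL2⟩ := exists_list (n / m) (n / m) 1 (by omega) (by omega)
      (invSeq (coeL L1)) (invSeq_zero (coeL L1)) (fun d hd1 hd2 => by omega)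
    have ha : ∀ l ∈ L1 ++ L2, l ≠ 0 := by
      intro l hl; rcases List.mem_append.mp hl with h | h
      exacts [h1 l h, h2 l h]
    have hfginv : compL n m (L1 ++ L2) = id := by
      rw [compL_mem_can n m hn hm0 hmn _ ha]
      have hz : ∀ d ∈ Finset.Icc 1 (n / m), coeL (L1 ++ L2) d • theta n m d = 0 := by
        intro d hd
        rw [Finset.mem_Icc] at hd
        have hcv : coeL (L1 ++ L2) d = conv (coeL L1) (invSeq (coeL L1)) d := by
          rw [coeL_append]
          refine Finset.sum_congr rfl (fun e he => ?_)
          rw [Finset.mem_range] at he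
          rw [hL2 (d - e) (by omega)]
        rw [hcv, conv_invSeq (coeL L1) hc0 d hd.1, zero_smul]
      rw [Finset.sum_eq_zero hz, add_zero, theta_zero]
    refine ⟨compL n m L2, hmem L2 h2, ?_, ?_⟩
    · rw [← compL_append]; exact hfginv
    · rw [← compL_append, hcomm L2 L1 h2 h1]; exact hfginv
  refine ⟨?_, ?_, ?_, hinv, ?_⟩
  · intro f hf g hg
    obtain ⟨L1, h1, rfl⟩ := hrep f hf
    obtain ⟨L2, h2, rfl⟩ := hrep g hg
    rw [← compL_append]
    refine hmem _ (fun l hl => ?_)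
    rcases List.mem_append.mp hl with h | h
    exacts [h1 l h, h2 l h]
  · intro f hf g hg
    obtain ⟨L1, h1, rfl⟩ := hrep f hf
    obtain ⟨L2, h2, rfl⟩ := hrep g hg
    rw [← compL_append, ← compL_append, hcomm L1 L2 h1 h2]
  · refine ⟨fun _ => 0, ?_⟩
    rw [theta_zero]
    simp
  · intro f hf
    obtain ⟨g, _, hfg, hgf⟩ := hinv f hf
    exact Function.bijective_iff_has_inverse.mpr
      ⟨g, fun x => congrFun hgf x, fun x => congrFun hfg x⟩
end

section
/- Let f = θ_{m,0} + Σ_{i=1}^{ℓ} a_i θ_{m,i} ∈ G_{n,m} with a_i ∈ F_2. Then f is an involution of F_2^n (i.e., f ∘ f = id) if and only if a_i = 0 for every i with 1 ≤ i ≤ ⌊ℓ/2⌋. -/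
private lemma z2 (v : ZMod 2) : v = 0 ∨ v = 1 := by revert v; decide

private lemma z2_one {v : ZMod 2} (h : v ≠ 0) : v = 1 := (z2 v).resolve_left h

/-- The auxiliary product `∏_{1 ≤ j < N, m ∤ j} (g j + 1)`. -/
private def Pr (m : ℕ) (g : ℕ → ZMod 2) (N : ℕ) : ZMod 2 :=
  ∏ j ∈ Finset.Ico 1 N, (if m ∣ j then 1 else g j + 1)

private lemma Pr_eq_zero {m N j : ℕ} {g : ℕ → ZMod 2} (hj1 : 1 ≤ j) (hjN : j < N)
    (hmj : ¬ m ∣ j) (hgj : g j = 1) : Pr m g N = 0 :=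
  Finset.prod_eq_zero (Finset.mem_Ico.2 ⟨hj1, hjN⟩) (by rw [if_neg hmj, hgj]; decide)

private lemma Pr_eq_one {m N : ℕ} {g : ℕ → ZMod 2}
    (h : ∀ j, 1 ≤ j → j < N → ¬ m ∣ j → g j = 0) : Pr m g N = 1 :=
  Finset.prod_eq_one (fun j hj => by
    rcases Finset.mem_Ico.1 hj with ⟨h1, h2⟩
    by_cases hd : m ∣ j
    · rw [if_pos hd]
    · rw [if_neg hd, h j h1 h2 hd, zero_add])

private lemma Pr_all_zero_of_ne_zero {m N : ℕ} {g : ℕ → ZMod 2} (h : Pr m g N ≠ 0) :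
    ∀ j, 1 ≤ j → j < N → ¬ m ∣ j → g j = 0 := by
  intro j h1 h2 hd
  rcases z2 (g j) with h0 | h0
  · exact h0
  · exact absurd (Pr_eq_zero h1 h2 hd h0) h

private lemma Pr_split {m M R : ℕ} (g : ℕ → ZMod 2) (hM : m ∣ M) (h1 : 1 ≤ M) :
    Pr m g (M + R) = Pr m g M * Pr m (fun j => g (M + j)) R := by
  rcases Nat.eq_zero_or_pos R with hR | hR
  · simp [Pr, hR]
  · unfold Pr
    rw [← Finset.prod_Ico_consecutive _ h1 (Nat.le_add_right M R)]
    congr 1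
    rw [Finset.prod_Ico_eq_prod_range]
    have hMR : M + R - M = R := by omega
    rw [hMR, Finset.range_eq_Ico,
      ← Finset.prod_Ico_consecutive _ (Nat.zero_le 1) hR]
    have h0 : (∏ j ∈ Finset.Ico 0 1, (if m ∣ M + j then 1 else g (M + j) + 1)) = 1 := by
      simp [hM]
    rw [h0, one_mul]
    refine Finset.prod_congr rfl (fun j _ => ?_)
    have hiff : m ∣ M + j ↔ m ∣ j := ⟨fun h => (Nat.dvd_add_right hM).1 h, fun h => hM.add h⟩
    by_cases hd : m ∣ j
    · rw [if_pos hd, if_pos (hiff.2 hd)]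
    · rw [if_neg hd, if_neg (fun h => hd (hiff.1 h))]

/-- The key combinatorial identity, stated for abstract sequences. -/
private lemma key_s10 {m ℓ k : ℕ} (hm : 2 ≤ m) (hk : 1 ≤ k) (a b c : ℕ → ZMod 2)
    (hc : ∀ p, c p = b p + ∑ r ∈ Finset.Icc 1 ℓ,
        a r * (b (p + m * r) * Pr m (fun j => b (p + j)) (m * r))) :
    c (m * k) * Pr m c (m * k) =
      b (m * k) * Pr m b (m * k) +
        ∑ r ∈ Finset.Icc 1 ℓ, a r * (b (m * (k + r)) * Pr m b (m * (k + r))) := by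
  set M := m * k with hMdef
  have hM1 : 1 ≤ M := by
    have : 0 < m * k := Nat.mul_pos (by omega) hk
    omega
  have hmM : m ∣ M := dvd_mul_right m k
  have cM_zero : ∀ w r : ℕ, 1 ≤ w → w < M → ¬ m ∣ w → M < w + m * r → b (w + m * r) = 1 →
      (∀ j, 1 ≤ j → j < m * r → ¬ m ∣ j → b (w + j) = 0) → c M = 0 := by
    intro w r hw1 hwM hmw hMW hbW hz
    rw [hc M]
    have hbM : b M = 0 := by
      have h3 : ¬ m ∣ (M - w) := by
        intro hd
        have h4 := Nat.dvd_sub hmM hd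
        rw [Nat.sub_sub_self hwM.le] at h4
        exact hmw h4
      have h5 := hz (M - w) (by omega) (by omega) h3
      rwa [Nat.add_sub_cancel' hwM.le] at h5
    rw [hbM, zero_add]
    refine Finset.sum_eq_zero (fun r' _ => ?_)
    have hV : m ∣ M + m * r' := hmM.add (dvd_mul_right m r')
    have hW : ¬ m ∣ (w + m * r) := by
      intro hd
      have h4 := Nat.dvd_sub hd (dvd_mul_right m r)
      rw [Nat.add_sub_cancel] at h4
      exact hmw h4
    rcases lt_trichotomy (M + m * r') (w + m * r) with hlt | heq | hgt
    · have h3 : ¬ m ∣ (M + m * r' - w) := by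
        intro hd
        have h4 := Nat.dvd_sub hV hd
        rw [Nat.sub_sub_self (by omega : w ≤ M + m * r')] at h4
        exact hmw h4
      have hb0 := hz (M + m * r' - w) (by omega) (by omega) h3
      rw [Nat.add_sub_cancel' (by omega : w ≤ M + m * r')] at hb0
      rw [hb0, zero_mul, mul_zero]
    · exact absurd (by rw [← heq]; exact hV) hW
    · have h3 : ¬ m ∣ (w + m * r - M) := by
        intro hd
        have h4 := hmM.add hd
        rw [Nat.add_sub_cancel' hMW.le] at h4
        exact hW h4
      have hg : b (M + (w + m * r - M)) = 1 := by
        rw [Nat.add_sub_cancel' hMW.le]; exact hbW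
      rw [Pr_eq_zero (by omega) (by omega) h3 hg, mul_zero, mul_zero]
  by_cases hA : ∀ w, 1 ≤ w → w < M → ¬ m ∣ w → b w = 0
  · -- Case A: the window of `b` is all zero
    have hPrb : Pr m b M = 1 := Pr_eq_one hA
    have hRHS : b M * Pr m b M +
        ∑ r ∈ Finset.Icc 1 ℓ, a r * (b (m * (k + r)) * Pr m b (m * (k + r))) = c M := by
      rw [hc M, hPrb, mul_one]
      congr 1
      refine Finset.sum_congr rfl (fun r _ => ?_)
      have hmkr : m * (k + r) = M + m * r := by rw [hMdef]; ring
      rw [hmkr, Pr_split b hmM hM1, hPrb, one_mul]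
    rw [hRHS]
    by_cases hA1 : ∀ p, 1 ≤ p → p < M → ¬ m ∣ p → c p = 0
    · rw [Pr_eq_one hA1, mul_one]
    · push_neg at hA1
      obtain ⟨p, hp1, hpM, hmp, hcp⟩ := hA1
      rw [Pr_eq_zero hp1 hpM hmp (z2_one hcp), mul_zero]
      have hbp : b p = 0 := hA p hp1 hpM hmp
      have hsum : (∑ r ∈ Finset.Icc 1 ℓ,
          a r * (b (p + m * r) * Pr m (fun j => b (p + j)) (m * r))) ≠ 0 := by
        intro h0
        rw [hc p, hbp, zero_add, h0] at hcp
        exact hcp rfl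
      obtain ⟨r, _, hterm⟩ := Finset.exists_ne_zero_of_sum_ne_zero hsum
      rw [mul_ne_zero_iff] at hterm
      obtain ⟨-, hterm⟩ := hterm
      rw [mul_ne_zero_iff] at hterm
      obtain ⟨hbpr, hPrr⟩ := hterm
      have hbpr1 : b (p + m * r) = 1 := z2_one hbpr
      have hz := Pr_all_zero_of_ne_zero hPrr
      have hnW : ¬ m ∣ (p + m * r) := by
        intro hd
        have h4 := Nat.dvd_sub hd (dvd_mul_right m r)
        rw [Nat.add_sub_cancel] at h4
        exact hmp h4
      have hMW : M < p + m * r := by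
        rcases lt_trichotomy (p + m * r) M with h | h | h
        · have h5 := hA (p + m * r) (by omega) h hnW
          rw [h5] at hbpr1
          exact absurd hbpr1 (by decide)
        · exact absurd (by rw [h]; exact hmM) hnW
        · exact h
      exact (cM_zero p r hp1 hpM hmp hMW hbpr1 hz).symm
  · -- Case B: some `b w = 1` in the window
    push_neg at hA
    obtain ⟨w, hw1, hwM, hmw, hbw⟩ := hA
    have hbw1 : b w = 1 := z2_one hbw
    have hPrbM : Pr m b M = 0 := Pr_eq_zero hw1 hwM hmw hbw1
    have hRHS0 : ∀ r ∈ Finset.Icc 1 ℓ,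
        a r * (b (m * (k + r)) * Pr m b (m * (k + r))) = 0 := by
      intro r _
      have hMle : M ≤ m * (k + r) := Nat.mul_le_mul_left m (by omega)
      rw [Pr_eq_zero hw1 (by omega) hmw hbw1, mul_zero, mul_zero]
    rw [hPrbM, mul_zero, Finset.sum_eq_zero hRHS0, add_zero]
    have chain : ∀ d w', 1 ≤ w' → w' < M → M ≤ w' + d → ¬ m ∣ w' → b w' = 1 →
        (∃ p, 1 ≤ p ∧ p < M ∧ ¬ m ∣ p ∧ c p = 1) ∨ c M = 0 := by
      intro d
      induction d with
      | zero => intro w' _ h2 h3 _ _; omega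
      | succ d ih =>
        intro w' hw'1 hw'M hMd hmw' hbw'
        by_cases hcw : c w' = 0
        · have hsum : (∑ r ∈ Finset.Icc 1 ℓ,
              a r * (b (w' + m * r) * Pr m (fun j => b (w' + j)) (m * r))) ≠ 0 := by
            intro h0
            rw [hc w', hbw', h0, add_zero] at hcw
            exact one_ne_zero hcw
          obtain ⟨r, hr, hterm⟩ := Finset.exists_ne_zero_of_sum_ne_zero hsum
          rw [mul_ne_zero_iff] at hterm
          obtain ⟨-, hterm⟩ := hterm
          rw [mul_ne_zero_iff] at hterm
          obtain ⟨hbW, hPrW⟩ := hterm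
          have hbW1 : b (w' + m * r) = 1 := z2_one hbW
          have hz := Pr_all_zero_of_ne_zero hPrW
          have hnW : ¬ m ∣ (w' + m * r) := by
            intro hd
            have h4 := Nat.dvd_sub hd (dvd_mul_right m r)
            rw [Nat.add_sub_cancel] at h4
            exact hmw' h4
          have hr1 : 1 ≤ r := (Finset.mem_Icc.1 hr).1
          have hmr2 : 2 ≤ m * r := le_trans (by omega) (Nat.mul_le_mul hm hr1)
          rcases lt_trichotomy (w' + m * r) M with hlt | heq | hgt
          · exact ih (w' + m * r) (by omega) hlt (by omega) hnW hbW1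
          · exact absurd (by rw [heq]; exact hmM) hnW
          · exact Or.inr (cM_zero w' r hw'1 hw'M hmw' hgt hbW1 hz)
        · exact Or.inl ⟨w', hw'1, hw'M, hmw', z2_one hcw⟩
    rcases chain M w hw1 hwM (by omega) hmw hbw1 with ⟨p, hp1, hpM, hmp, hcp⟩ | hcM
    · rw [Pr_eq_zero hp1 hpM hmp hcp, mul_zero]
    · rw [hcM, zero_mul]

private lemma idx_idx {n : ℕ} (i : Fin n) (p q : ℕ) : idx (idx i p) q = idx i (p + q) := by
  unfold idx
  apply Fin.ext
  simp only
  rw [Nat.mod_add_mod, Nat.add_assoc]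

private lemma idx_zero {n : ℕ} (i : Fin n) : idx i 0 = i := by
  unfold idx
  apply Fin.ext
  simp [Nat.mod_eq_of_lt i.isLt]

private lemma theta_apply {n m k : ℕ} (hk : k ≠ 0) (x : Fin n → ZMod 2) (i : Fin n) (p : ℕ) :
    theta n m k x (idx i p) =
      x (idx i (p + m * k)) * Pr m (fun j => x (idx i (p + j))) (m * k) := by
  unfold theta
  rw [if_neg hk]
  rw [idx_idx]
  congr 1
  rw [Finset.prod_filter]
  unfold Pr
  refine Finset.prod_congr rfl (fun j _ => ?_)
  rw [idx_idx]
  by_cases hd : m ∣ j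
  · simp [hd]
  · simp [hd]

private lemma f_apply {n m L : ℕ} (a : ℕ → ZMod 2) (x : Fin n → ZMod 2) (q : Fin n) :
    (theta n m 0 + ∑ k ∈ Finset.Icc 1 L, a k • theta n m k) x q
      = x q + ∑ k ∈ Finset.Icc 1 L, a k * theta n m k x q := by
  have h0 : theta n m 0 = id := by unfold theta; rw [if_pos rfl]
  simp [h0, Pi.add_apply, Finset.sum_apply, Pi.smul_apply, smul_eq_mul]

private lemma comp_theta {n m L k : ℕ} (hm : 2 ≤ m) (hk : 1 ≤ k) (a : ℕ → ZMod 2)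
    (x : Fin n → ZMod 2) (i : Fin n) :
    theta n m k ((theta n m 0 + ∑ r ∈ Finset.Icc 1 L, a r • theta n m r) x) i
      = theta n m k x i + ∑ r ∈ Finset.Icc 1 L, a r * theta n m (k + r) x i := by
  have hk0 : k ≠ 0 := by omega
  have h1 : theta n m k ((theta n m 0 + ∑ r ∈ Finset.Icc 1 L, a r • theta n m r) x) i
      = (fun j => (theta n m 0 + ∑ r ∈ Finset.Icc 1 L, a r • theta n m r) x (idx i j)) (m * k)
        * Pr m (fun j => (theta n m 0 + ∑ r ∈ Finset.Icc 1 L, a r • theta n m r) x (idx i j))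
            (m * k) := by
    have h := theta_apply (m := m) hk0 ((theta n m 0 + ∑ r ∈ Finset.Icc 1 L, a r • theta n m r) x) i 0
    rw [idx_zero] at h
    simp only [zero_add] at h
    exact h
  have h2 : theta n m k x i
      = (fun j => x (idx i j)) (m * k) * Pr m (fun j => x (idx i j)) (m * k) := by
    have h := theta_apply (m := m) hk0 x i 0
    rw [idx_zero] at h
    simp only [zero_add] at h
    exact h
  have h3 : ∀ r ∈ Finset.Icc 1 L, a r * theta n m (k + r) x i
      = a r * ((fun j => x (idx i j)) (m * (k + r)) * Pr m (fun j => x (idx i j)) (m * (k + r))) := by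
    intro r hr
    have hr0 : k + r ≠ 0 := by omega
    have h := theta_apply (m := m) hr0 x i 0
    rw [idx_zero] at h
    simp only [zero_add] at h
    rw [h]
  rw [h1, h2, Finset.sum_congr rfl h3]
  refine key_s10 hm hk a (fun j => x (idx i j))
    (fun j => (theta n m 0 + ∑ r ∈ Finset.Icc 1 L, a r • theta n m r) x (idx i j)) ?_
  intro p
  rw [f_apply]
  congr 1
  refine Finset.sum_congr rfl (fun r hr => ?_)
  have hr0 : r ≠ 0 := by
    have := (Finset.mem_Icc.1 hr).1; omega
  rw [theta_apply (m := m) hr0 x i p]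

private lemma theta_eq_zero {n m k : ℕ} (hn : 1 ≤ n) (hmn : ¬ m ∣ n) (hk : k ≠ 0)
    (hbig : n < m * k) (x : Fin n → ZMod 2) (i : Fin n) : theta n m k x i = 0 := by
  have h := theta_apply (m := m) hk x i 0
  rw [idx_zero] at h
  simp only [zero_add] at h
  rw [h]
  have hjd : ¬ m ∣ (m * k - n) := by
    intro hd
    have h2 := Nat.dvd_sub (dvd_mul_right m k) hd
    rw [Nat.sub_sub_self (by omega : n ≤ m * k)] at h2
    exact hmn h2
  have hidx : idx i (m * k - n) = idx i (m * k) := by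
    unfold idx
    apply Fin.ext
    simp only
    conv_rhs => rw [show m * k = (m * k - n) + n by omega]
    rw [← Nat.add_assoc, Nat.add_mod_right]
  have hmem : (m * k - n) ∈ Finset.Ico 1 (m * k) := Finset.mem_Ico.2 ⟨by omega, by omega⟩
  unfold Pr
  rw [← Finset.prod_erase_mul _ _ hmem, if_neg hjd]
  simp only [hidx]
  rcases z2 (x (idx i (m * k))) with h0 | h0 <;>
    simp [h0, show (1 : ZMod 2) + 1 = 0 by decide]

private lemma comp_eval {n m : ℕ} (hn : 1 ≤ n) (hm : 2 ≤ m) (hmn : ¬ m ∣ n) (a : ℕ → ZMod 2)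
    (x : Fin n → ZMod 2) (q : Fin n) :
    (theta n m 0 + ∑ i ∈ Finset.Icc 1 (n / m), a i • theta n m i)
      ((theta n m 0 + ∑ i ∈ Finset.Icc 1 (n / m), a i • theta n m i) x) q
    = x q + ∑ k ∈ Finset.Icc 1 (n / m / 2), a k * theta n m (k + k) x q := by
  have hL : ∀ k ∈ Finset.Icc 1 (n / m),
      a k * theta n m k ((theta n m 0 + ∑ i ∈ Finset.Icc 1 (n / m), a i • theta n m i) x) q
      = a k * theta n m k x q
        + a k * ∑ r ∈ Finset.Icc 1 (n / m), a r * theta n m (k + r) x q := by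
    intro k hk
    rw [comp_theta hm (Finset.mem_Icc.1 hk).1 a x q, mul_add]
  rw [f_apply, f_apply, Finset.sum_congr rfl hL, Finset.sum_add_distrib]
  have triv : ∀ u s d : ZMod 2, u + s + (s + d) = u + d := by decide
  rw [triv]
  congr 1
  -- diagonal reduction
  have h1 : ∑ k ∈ Finset.Icc 1 (n / m),
      a k * ∑ r ∈ Finset.Icc 1 (n / m), a r * theta n m (k + r) x q
      = ∑ p ∈ (Finset.Icc 1 (n / m)) ×ˢ (Finset.Icc 1 (n / m)),
          a p.1 * (a p.2 * theta n m (p.1 + p.2) x q) := by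
    rw [Finset.sum_product]
    exact Finset.sum_congr rfl (fun k _ => by rw [Finset.mul_sum])
  rw [h1, ← Finset.sum_filter_add_sum_filter_not
      ((Finset.Icc 1 (n / m)) ×ˢ (Finset.Icc 1 (n / m))) (fun p => p.1 = p.2)]
  have hoff : ∑ p ∈ ((Finset.Icc 1 (n / m)) ×ˢ (Finset.Icc 1 (n / m))).filter
      (fun p => ¬ p.1 = p.2), a p.1 * (a p.2 * theta n m (p.1 + p.2) x q) = 0 := by
    refine Finset.sum_involution (fun p _ => (p.2, p.1)) ?_ ?_ ?_ ?_
    · intro p _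
      have hcomm : a p.2 * (a p.1 * theta n m (p.2 + p.1) x q)
          = a p.1 * (a p.2 * theta n m (p.1 + p.2) x q) := by
        rw [Nat.add_comm]; ring
      calc a p.1 * (a p.2 * theta n m (p.1 + p.2) x q)
            + a (p.2, p.1).1 * (a (p.2, p.1).2 * theta n m ((p.2, p.1).1 + (p.2, p.1).2) x q)
          = a p.1 * (a p.2 * theta n m (p.1 + p.2) x q)
            + a p.1 * (a p.2 * theta n m (p.1 + p.2) x q) := by rw [hcomm]
        _ = 0 := by
            rcases z2 (a p.1 * (a p.2 * theta n m (p.1 + p.2) x q)) with h0 | h0 <;>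
              rw [h0] <;> decide
    · intro p hp _
      have hne := (Finset.mem_filter.1 hp).2
      intro heq
      exact hne (congrArg Prod.snd heq)
    · intro p hp
      rcases Finset.mem_filter.1 hp with ⟨hp1, hp2⟩
      rcases Finset.mem_product.1 hp1 with ⟨ha1, ha2⟩
      exact Finset.mem_filter.2 ⟨Finset.mem_product.2 ⟨ha2, ha1⟩, fun h => hp2 h.symm⟩
    · intro p _
      rfl
  rw [hoff, add_zero]
  have hdiag : ∑ p ∈ ((Finset.Icc 1 (n / m)) ×ˢ (Finset.Icc 1 (n / m))).filter
      (fun p => p.1 = p.2), a p.1 * (a p.2 * theta n m (p.1 + p.2) x q)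
      = ∑ k ∈ Finset.Icc 1 (n / m), a k * theta n m (k + k) x q := by
    refine Finset.sum_nbij' (fun p => p.1) (fun k => (k, k)) ?_ ?_ ?_ ?_ ?_
    · intro p hp
      rcases Finset.mem_filter.1 hp with ⟨hp1, _⟩
      exact (Finset.mem_product.1 hp1).1
    · intro k hk
      exact Finset.mem_filter.2 ⟨Finset.mem_product.2 ⟨hk, hk⟩, rfl⟩
    · intro p hp
      have h : p.1 = p.2 := (Finset.mem_filter.1 hp).2
      exact Prod.ext rfl h
    · intro k _; rfl
    · intro p hp
      have h : p.1 = p.2 := (Finset.mem_filter.1 hp).2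
      have haa : a p.1 * a p.1 = a p.1 := by
        rcases z2 (a p.1) with h0 | h0 <;> rw [h0] <;> decide
      rw [← h, ← mul_assoc, haa]
  rw [hdiag]
  -- trim terms with k > (n/m)/2
  symm
  refine Finset.sum_subset ?_ ?_
  · intro k hk
    rcases Finset.mem_Icc.1 hk with ⟨h1, h2⟩
    exact Finset.mem_Icc.2 ⟨h1, le_trans h2 (Nat.div_le_self _ _)⟩
  · intro k hk hk2
    rcases Finset.mem_Icc.1 hk with ⟨h1, h2⟩
    have h3 : n / m / 2 < k := by
      by_contra h4
      exact hk2 (Finset.mem_Icc.2 ⟨h1, by omega⟩)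
    have hdm := Nat.div_add_mod n m
    have hmod : n % m < m := Nat.mod_lt _ (by omega)
    have hne : m * (n / m) ≠ n := fun hh => hmn (Dvd.intro _ hh)
    have hkk : n / m + 1 ≤ k + k := by omega
    have hbig : n < m * (k + k) := by
      have h5 : m * (n / m + 1) ≤ m * (k + k) := Nat.mul_le_mul_left m hkk
      have h6 : m * (n / m + 1) = m * (n / m) + m := by ring
      omega
    rw [theta_eq_zero hn hmn (by omega) hbig, mul_zero]

theorem stmt10 (n m : ℕ) (hn : 1 ≤ n) (hm : 2 ≤ m) (hmn : ¬ m ∣ n)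
    (a : ℕ → ZMod 2) :
    ((theta n m 0 + ∑ i ∈ Finset.Icc 1 (n / m), a i • theta n m i) ∘
        (theta n m 0 + ∑ i ∈ Finset.Icc 1 (n / m), a i • theta n m i) = id) ↔
      ∀ i : ℕ, 1 ≤ i → i ≤ n / m / 2 → a i = 0 := by
  constructor
  · intro h k hk1 hk2
    set x₀ : Fin n → ZMod 2 := fun p => if (p : ℕ) = 2 * m * k then 1 else 0 with hx₀
    have hx := congrFun (congrFun h x₀) (⟨0, by omega⟩ : Fin n)
    rw [Function.comp_apply, comp_eval hn hm hmn] at hx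
    simp only [id_eq] at hx
    rw [add_eq_left] at hx
    have hdm := Nat.div_add_mod n m
    have hmod : n % m < m := Nat.mod_lt _ (by omega)
    have hne : m * (n / m) ≠ n := fun hh => hmn (Dvd.intro _ hh)
    have hdm2 := Nat.div_add_mod (n / m) 2
    have hlt : ∀ k', k' ≤ n / m / 2 → m * (k' + k') < n := by
      intro k' hk'
      have h2 : k' + k' ≤ n / m := by omega
      have h5 : m * (k' + k') ≤ m * (n / m) := Nat.mul_le_mul_left m h2
      omega
    have hidxval : ∀ j, j < n → ((idx (⟨0, by omega⟩ : Fin n) j : Fin n) : ℕ) = j := by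
      intro j hj
      unfold idx
      simp [Nat.mod_eq_of_lt hj]
    have hth : ∀ k', 1 ≤ k' → k' ≤ n / m / 2 →
        theta n m (k' + k') x₀ (⟨0, by omega⟩ : Fin n)
          = if m * (k' + k') = 2 * m * k then 1 else 0 := by
      intro k' h1 h2
      have hap := theta_apply (n := n) (m := m) (k := k' + k') (by omega) x₀
        (⟨0, by omega⟩ : Fin n) 0
      rw [idx_zero] at hap
      simp only [zero_add] at hap
      rw [hap]
      have hxv : x₀ (idx (⟨0, by omega⟩ : Fin n) (m * (k' + k')))
          = if m * (k' + k') = 2 * m * k then 1 else 0 := by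
        rw [hx₀]
        simp only
        rw [hidxval _ (hlt k' h2)]
      have hPr : Pr m (fun j => x₀ (idx (⟨0, by omega⟩ : Fin n) j)) (m * (k' + k')) = 1 := by
        apply Pr_eq_one
        intro j hj1 hj2 hjd
        have hjn : j < n := lt_trans hj2 (hlt k' h2)
        rw [hx₀]
        simp only
        rw [hidxval _ hjn, if_neg]
        intro hje
        exact hjd (by rw [hje]; exact ⟨2 * k, by ring⟩)
      rw [hxv, hPr, mul_one]
    have hsum : ∑ k' ∈ Finset.Icc 1 (n / m / 2), a k' * theta n m (k' + k') x₀
        (⟨0, by omega⟩ : Fin n) = a k := by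
      rw [Finset.sum_eq_single_of_mem k (Finset.mem_Icc.2 ⟨hk1, hk2⟩)]
      · rw [hth k hk1 hk2, if_pos (by ring), mul_one]
      · intro k' hk' hne'
        rcases Finset.mem_Icc.1 hk' with ⟨h1, h2⟩
        rw [hth k' h1 h2, if_neg, mul_zero]
        intro hje
        have h6 : m * (k' + k') = m * (2 * k) := by rw [hje]; ring
        have h7 : k' + k' = 2 * k := Nat.eq_of_mul_eq_mul_left (by omega) h6
        omega
    rw [hsum] at hx
    exact hx
  · intro h
    funext x q
    rw [Function.comp_apply, comp_eval hn hm hmn, id_eq]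
    have hz : ∑ k ∈ Finset.Icc 1 (n / m / 2), a k * theta n m (k + k) x q = 0 := by
      refine Finset.sum_eq_zero (fun k hk => ?_)
      rcases Finset.mem_Icc.1 hk with ⟨h1, h2⟩
      rw [h k h1 h2, zero_mul]
    rw [hz, add_zero]
end
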